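/- Let n ≥ q ≥ 1 be integers, let v ∈ ℝⁿ have all entries positive, and let X ∈ ℝ^{n×q} satisfy XᵀX = I_q and Xᵀv ≠ 0. Set q_* = Xᵀv/‖Xᵀv‖₂ and Y_* = v q_*ᵀ/‖v‖₂ + X (I_q − q_* q_*ᵀ). Then Y_* ∈ F_v and ‖X − Y_*‖_F ≤ ‖X − Y‖_F for every Y ∈ F_v. -/

import Mathlib

open Matrix

lemma aux_transpose_vmv {n q : ℕ} (a : Fin n → ℝ) (b : Fin q → ℝ) :
    (vecMulVec a b)ᵀ = vecMulVec b a := by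
  ext i j; simp [vecMulVec_apply, mul_comm]

lemma aux_vmv_mul_vmv {n q p : ℕ} (a : Fin n → ℝ) (b : Fin q → ℝ)
    (c : Fin q → ℝ) (d : Fin p → ℝ) :
    vecMulVec a b * vecMulVec c d = (b ⬝ᵥ c) • vecMulVec a d := by
  ext i j
  simp only [mul_apply, vecMulVec_apply, Matrix.smul_apply, smul_eq_mul, dotProduct,
    Finset.sum_mul]
  apply Finset.sum_congr rfl; intros; ring

lemma aux_mul_vmv {n m q : ℕ} (M : Matrix (Fin n) (Fin m) ℝ) (a : Fin m → ℝ) (b : Fin q → ℝ) :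
    M * vecMulVec a b = vecMulVec (M *ᵥ a) b := by
  ext i j
  simp only [mul_apply, vecMulVec_apply, mulVec, dotProduct, Finset.sum_mul]
  apply Finset.sum_congr rfl; intros; ring

lemma aux_vmv_mul {n m q : ℕ} (a : Fin q → ℝ) (b : Fin m → ℝ) (M : Matrix (Fin m) (Fin n) ℝ) :
    vecMulVec a b * M = vecMulVec a (Mᵀ *ᵥ b) := by
  ext i j
  simp only [mul_apply, vecMulVec_apply, mulVec, dotProduct, transpose_apply,
    Finset.mul_sum]
  apply Finset.sum_congr rfl; intros; ring

lemma aux_vmv_mulVec {n q : ℕ} (a : Fin n → ℝ) (b : Fin q → ℝ) (x : Fin q → ℝ) :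
    vecMulVec a b *ᵥ x = (b ⬝ᵥ x) • a := by
  ext i
  simp only [mulVec, vecMulVec_apply, dotProduct, Pi.smul_apply, smul_eq_mul,
    Finset.sum_mul]
  apply Finset.sum_congr rfl; intros; ring

lemma aux_trace_vmv {q : ℕ} (a b : Fin q → ℝ) :
    Matrix.trace (vecMulVec a b) = a ⬝ᵥ b := by
  simp [Matrix.trace, vecMulVec_apply, dotProduct, Matrix.diag]

lemma aux_trace_eq_sum {n q : ℕ} (A B : Matrix (Fin n) (Fin q) ℝ) :
    Matrix.trace (Aᵀ * B) = ∑ p : Fin q × Fin n, A p.2 p.1 * B p.2 p.1 := by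
  rw [Fintype.sum_prod_type]
  simp [Matrix.trace, Matrix.diag, mul_apply]

lemma aux_cs_frob {n q : ℕ} (A B : Matrix (Fin n) (Fin q) ℝ) (c : ℝ) (hc : 0 ≤ c)
    (hA : Matrix.trace (Aᵀ * A) = c) (hB : Matrix.trace (Bᵀ * B) = c) :
    Matrix.trace (Aᵀ * B) ≤ c := by
  have h := Finset.sum_mul_sq_le_sq_mul_sq Finset.univ
    (fun p : Fin q × Fin n => A p.2 p.1) (fun p : Fin q × Fin n => B p.2 p.1)
  rw [aux_trace_eq_sum]
  have hA' : ∑ p : Fin q × Fin n, A p.2 p.1 ^ 2 = c := by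
    rw [← hA, aux_trace_eq_sum]; apply Finset.sum_congr rfl; intros; ring
  have hB' : ∑ p : Fin q × Fin n, B p.2 p.1 ^ 2 = c := by
    rw [← hB, aux_trace_eq_sum]; apply Finset.sum_congr rfl; intros; ring
  rw [hA', hB'] at h
  nlinarith [h]

theorem stmt_9 (n q : ℕ) (hq : 1 ≤ q) (hnq : q ≤ n)
    (v : Fin n → ℝ) (hv : ∀ i, 0 < v i)
    (X : Matrix (Fin n) (Fin q) ℝ)
    (hX : Xᵀ * X = 1) (hXv : Xᵀ *ᵥ v ≠ 0)
    (qs : Fin q → ℝ)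
    (hqs : qs = fun j => (Xᵀ *ᵥ v) j / Real.sqrt (∑ k, ((Xᵀ *ᵥ v) k) ^ 2))
    (Ys : Matrix (Fin n) (Fin q) ℝ)
    (hYs : Ys = (Real.sqrt (∑ i, v i ^ 2))⁻¹ • vecMulVec v qs +
      X * (1 - vecMulVec qs qs)) :
    (Ysᵀ * Ys = 1 ∧ ∃ c : Fin q → ℝ, Ys *ᵥ c = v) ∧
    ∀ Y : Matrix (Fin n) (Fin q) ℝ, (Yᵀ * Y = 1 ∧ ∃ c : Fin q → ℝ, Y *ᵥ c = v) →
      Real.sqrt (Matrix.trace ((X - Ys)ᵀ * (X - Ys))) ≤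
        Real.sqrt (Matrix.trace ((X - Y)ᵀ * (X - Y))) := by
  set w : Fin q → ℝ := Xᵀ *ᵥ v with hw
  have hw2pos : 0 < ∑ k, w k ^ 2 := by
    rcases Function.ne_iff.mp hXv with ⟨k, hk⟩
    simp only [Pi.zero_apply] at hk
    have hk' : 0 < w k ^ 2 := by positivity
    exact Finset.sum_pos' (fun i _ => sq_nonneg _) ⟨k, Finset.mem_univ k, hk'⟩
  set nw := Real.sqrt (∑ k, w k ^ 2) with hnw
  have hnwpos : 0 < nw := Real.sqrt_pos.mpr hw2pos
  have hnwsq : nw ^ 2 = ∑ k, w k ^ 2 := Real.sq_sqrt hw2pos.le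
  have hv2pos : 0 < ∑ i, v i ^ 2 :=
    Finset.sum_pos (fun i _ => by have := hv i; positivity) ⟨⟨0, by omega⟩, Finset.mem_univ _⟩
  set nv := Real.sqrt (∑ i, v i ^ 2) with hnv
  have hnvpos : 0 < nv := Real.sqrt_pos.mpr hv2pos
  have hnvsq : nv ^ 2 = ∑ i, v i ^ 2 := Real.sq_sqrt hv2pos.le
  have hwqs : w = nw • qs := by
    funext j
    simp only [hqs, Pi.smul_apply, smul_eq_mul, ← hnw]
    rw [mul_comm, div_mul_cancel₀ _ hnwpos.ne']
  have hqq : qs ⬝ᵥ qs = 1 := by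
    simp only [hqs, dotProduct, div_mul_div_comm, ← Finset.sum_div, ← hnw]
    have h1 : ∑ j, w j * w j = nw * nw := by
      rw [← pow_two, hnwsq]
      exact Finset.sum_congr rfl (fun _ _ => (pow_two _).symm)
    rw [h1, div_self (mul_pos hnwpos hnwpos).ne']
  have hwdqs : w ⬝ᵥ qs = nw := by
    rw [hwqs, smul_dotProduct, hqq, smul_eq_mul, mul_one]
  have hvv : v ⬝ᵥ v = nv ^ 2 := by
    rw [hnvsq, dotProduct]
    exact Finset.sum_congr rfl (fun _ _ => (pow_two _).symm)
  set Q : Matrix (Fin q) (Fin q) ℝ := vecMulVec qs qs with hQ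
  have hQQ : Q * Q = Q := by rw [hQ, aux_vmv_mul_vmv, hqq, one_smul]
  have hQT : Qᵀ = Q := aux_transpose_vmv qs qs
  have h1Q : (1 - Q) * Q = 0 := by rw [sub_mul, one_mul, hQQ, sub_self]
  have hQ1 : Q * (1 - Q) = 0 := by rw [mul_sub, mul_one, hQQ, sub_self]
  have h1Q1 : (1 - Q) * (1 - Q) = 1 - Q := by rw [mul_sub, mul_one, h1Q, sub_zero]
  have hvmvsmul : ∀ (a : Fin q → ℝ) (cc : ℝ) (b : Fin q → ℝ),
      vecMulVec a (cc • b) = cc • vecMulVec a b := by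
    intro a cc b; ext i j; simp [vecMulVec_apply]; ring
  have hvmvsmul' : ∀ (cc : ℝ) (a b : Fin q → ℝ),
      vecMulVec (cc • a) b = cc • vecMulVec a b := by
    intro cc a b; ext i j; simp [vecMulVec_apply]; ring
  have hA'X : vecMulVec qs v * X = nw • Q := by
    rw [aux_vmv_mul, ← hw, hwqs, hvmvsmul, hQ]
  have hXA : Xᵀ * vecMulVec v qs = nw • Q := by
    rw [aux_mul_vmv, ← hw, hwqs, hvmvsmul', hQ]
  have hA'A : vecMulVec qs v * vecMulVec v qs = nv ^ 2 • Q := by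
    rw [aux_vmv_mul_vmv, hvv, hQ]
  have hT2 : vecMulVec qs v * (X * (1 - Q)) = 0 := by
    rw [← Matrix.mul_assoc, hA'X, Matrix.smul_mul, hQ1, smul_zero]
  have hT3 : (1 - Q) * (Xᵀ * vecMulVec v qs) = 0 := by
    rw [hXA, Matrix.mul_smul, h1Q, smul_zero]
  have hT4 : (1 - Q) * (Xᵀ * (X * (1 - Q))) = 1 - Q := by
    rw [← Matrix.mul_assoc Xᵀ X, hX, one_mul, h1Q1]
  have hYsT : Ysᵀ = nv⁻¹ • vecMulVec qs v + (1 - Q) * Xᵀ := by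
    rw [hYs, transpose_add, transpose_smul, aux_transpose_vmv, transpose_mul,
      transpose_sub, transpose_one, hQT]
  have hYsYs : Ysᵀ * Ys = 1 := by
    rw [hYsT, hYs]
    simp only [Matrix.add_mul, Matrix.mul_add, Matrix.smul_mul, Matrix.mul_smul,
      Matrix.mul_assoc, smul_smul]
    rw [hA'A, hT2, hT3, hT4]
    have hsc : nv⁻¹ * (nv⁻¹ * nv ^ 2) = 1 := by
      field_simp
    simp only [smul_zero, add_zero, zero_add, smul_smul, hsc, one_smul]
    abel
  have hmem : ∃ c : Fin q → ℝ, Ys *ᵥ c = v := by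
    refine ⟨nv • qs, ?_⟩
    rw [mulVec_smul, hYs, add_mulVec, smul_mulVec, aux_vmv_mulVec, hqq, one_smul]
    rw [← mulVec_mulVec, sub_mulVec, one_mulVec, hQ, aux_vmv_mulVec, hqq, one_smul,
      sub_self, mulVec_zero, add_zero, smul_smul, mul_inv_cancel₀ hnvpos.ne', one_smul]
  refine ⟨⟨hYsYs, hmem⟩, ?_⟩
  rintro Y ⟨hY1, c, hYc⟩
  apply Real.sqrt_le_sqrt
  have key : ∀ Z : Matrix (Fin n) (Fin q) ℝ, Zᵀ * Z = 1 →
      Matrix.trace ((X - Z)ᵀ * (X - Z)) = 2 * q - 2 * Matrix.trace (Xᵀ * Z) := by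
    intro Z hZ
    rw [transpose_sub, Matrix.sub_mul, Matrix.mul_sub, Matrix.mul_sub, hX, hZ]
    have hsym : Matrix.trace (Zᵀ * X) = Matrix.trace (Xᵀ * Z) := by
      rw [← Matrix.trace_transpose (Zᵀ * X), transpose_mul, transpose_transpose]
    rw [trace_sub, trace_sub, trace_sub, trace_one, hsym]
    simp [Fintype.card_fin]
    ring
  rw [key Ys hYsYs, key Y hY1]
  have htrQ : Matrix.trace Q = 1 := by rw [hQ, aux_trace_vmv, hqq]
  have htrYs : Matrix.trace (Xᵀ * Ys) = nv⁻¹ * nw + ((q : ℝ) - 1) := by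
    rw [hYs, Matrix.mul_add, Matrix.mul_smul, trace_add, trace_smul, aux_mul_vmv, ← hw,
      aux_trace_vmv, hwdqs, ← Matrix.mul_assoc, hX, one_mul, trace_sub, trace_one, htrQ]
    simp [Fintype.card_fin]
  have hc : c = Yᵀ *ᵥ v := by rw [← hYc, mulVec_mulVec, hY1, one_mulVec]
  have hcc : c ⬝ᵥ c = nv ^ 2 := by
    nth_rewrite 1 [hc]
    rw [mulVec_transpose, ← dotProduct_mulVec, hYc, hvv]
  set u : Fin q → ℝ := nv⁻¹ • c with hu
  have huu : u ⬝ᵥ u = 1 := by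
    rw [hu, smul_dotProduct, dotProduct_smul, hcc, smul_eq_mul, smul_eq_mul]
    field_simp
  have hYu : Y *ᵥ u = nv⁻¹ • v := by rw [hu, mulVec_smul, hYc]
  set P : Matrix (Fin q) (Fin q) ℝ := 1 - vecMulVec u u with hP
  have hVV : vecMulVec u u * vecMulVec u u = vecMulVec u u := by
    rw [aux_vmv_mul_vmv, huu, one_smul]
  have hPP : P * P = P := by
    rw [hP]
    simp only [mul_sub, sub_mul, mul_one, one_mul, hVV]
    abel
  have hPT : Pᵀ = P := by rw [hP, transpose_sub, transpose_one, aux_transpose_vmv]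
  have htrP : Matrix.trace P = (q : ℝ) - 1 := by
    rw [hP, trace_sub, trace_one, aux_trace_vmv, huu]
    simp [Fintype.card_fin]
  have hone : vecMulVec u u + P = 1 := by rw [hP]; abel
  have hsplit : Matrix.trace (Xᵀ * Y) =
      Matrix.trace (Xᵀ * Y * vecMulVec u u) + Matrix.trace (Xᵀ * Y * P) := by
    rw [← trace_add, ← Matrix.mul_add, hone, mul_one]
  have hterm1 : Matrix.trace (Xᵀ * Y * vecMulVec u u) ≤ nv⁻¹ * nw := by
    rw [aux_mul_vmv, aux_trace_vmv, ← mulVec_mulVec, hYu, mulVec_smul, ← hw,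
      smul_dotProduct, smul_eq_mul]
    have hu2 : ∑ i, u i ^ 2 = 1 := by
      rw [← huu, dotProduct]; exact Finset.sum_congr rfl (fun _ _ => pow_two _)
    have hcs : (w ⬝ᵥ u) ^ 2 ≤ nw ^ 2 := by
      have h := Finset.sum_mul_sq_le_sq_mul_sq Finset.univ w u
      rw [hu2, mul_one, ← hnwsq] at h
      exact h
    have hwu : w ⬝ᵥ u ≤ nw := by nlinarith [hcs, hnwpos]
    have h0 : (0:ℝ) ≤ nv⁻¹ := by positivity
    exact mul_le_mul_of_nonneg_left hwu h0
  have hterm2 : Matrix.trace (Xᵀ * Y * P) ≤ (q : ℝ) - 1 := by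
    have heq : Matrix.trace (Xᵀ * Y * P) = Matrix.trace ((X * P)ᵀ * (Y * P)) := by
      rw [transpose_mul, hPT, Matrix.trace_mul_comm (P * Xᵀ) (Y * P),
        ← Matrix.mul_assoc (Y * P) P Xᵀ, Matrix.mul_assoc Y P P, hPP,
        Matrix.mul_assoc Xᵀ Y P, Matrix.trace_mul_comm Xᵀ (Y * P)]
    have hq1 : (0:ℝ) ≤ (q : ℝ) - 1 := by
      have : (1:ℝ) ≤ (q : ℝ) := by exact_mod_cast hq
      linarith
    have hXPXP : Matrix.trace ((X * P)ᵀ * (X * P)) = (q : ℝ) - 1 := by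
      rw [transpose_mul, hPT, Matrix.mul_assoc P Xᵀ (X * P),
        ← Matrix.mul_assoc Xᵀ X P, hX, one_mul, hPP, htrP]
    have hYPYP : Matrix.trace ((Y * P)ᵀ * (Y * P)) = (q : ℝ) - 1 := by
      rw [transpose_mul, hPT, Matrix.mul_assoc P Yᵀ (Y * P),
        ← Matrix.mul_assoc Yᵀ Y P, hY1, one_mul, hPP, htrP]
    rw [heq]
    exact aux_cs_frob (X * P) (Y * P) _ hq1 hXPXP hYPYP
  have main : Matrix.trace (Xᵀ * Y) ≤ Matrix.trace (Xᵀ * Ys) := by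
    rw [htrYs, hsplit]
    linarith [hterm1, hterm2]
  linarith [main]
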